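/- Kusmin–Landau first derivative test: let I be an interval of ℝ and f : I → ℝ a C¹ function with f' monotone. If λ₁ > 0 satisfies λ₁ ≤ dist(f'(x), ℤ) for all x ∈ I, then |∑_{n ∈ I ∩ ℤ} e(f(n))| ≤ C/λ₁ for an absolute constant C. -/

import Mathlib

noncomputable def e (x : ℝ) : ℂ := Complex.exp (2 * Real.pi * Complex.I * x)

open Real Complex Finset

lemma e_add (x y : ℝ) : e (x + y) = e x * e y := by
  simp only [e]
  rw [← Complex.exp_add]
  congr 1
  push_cast
  ring

lemma e_abs (x : ℝ) : ‖e x‖ = 1 := by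
  simp only [e]
  rw [Complex.norm_exp]
  norm_num [Complex.mul_re, Complex.mul_im]

lemma e_int (n : ℤ) : e n = 1 := by
  simp only [e]
  have : (2 * ↑Real.pi * Complex.I * (n : ℝ) : ℂ) = (n : ℤ) * (2 * ↑Real.pi * Complex.I) := by
    push_cast; ring
  rw [this, Complex.exp_int_mul_two_pi_mul_I]

lemma e_eq (θ : ℝ) : e θ = Complex.exp ((2 * π * θ : ℝ) * Complex.I) := by
  simp only [e]; congr 1; push_cast; ring

lemma e_re (θ : ℝ) : (e θ).re = Real.cos (2 * π * θ) := by
  rw [e_eq, Complex.exp_ofReal_mul_I_re]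

lemma e_im (θ : ℝ) : (e θ).im = Real.sin (2 * π * θ) := by
  rw [e_eq, Complex.exp_ofReal_mul_I_im]

lemma e_sub_one (θ : ℝ) :
    e θ - 1 = Complex.exp ((π * θ : ℝ) * Complex.I) * (2 * Complex.I * Real.sin (π * θ)) := by
  have hsin : Complex.exp ((π*θ:ℝ) * Complex.I) - Complex.exp (-((π*θ:ℝ):ℂ) * Complex.I)
      = 2 * Complex.I * Real.sin (π * θ) := by
    rw [Complex.ofReal_sin, Complex.sin]
    linear_combination (Complex.exp ((π*θ:ℝ)*Complex.I) - Complex.exp (-((π*θ:ℝ):ℂ)*Complex.I)) * Complex.I_sq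
  have key : e θ - 1
      = Complex.exp ((π*θ:ℝ) * Complex.I) * (Complex.exp ((π*θ:ℝ) * Complex.I) - Complex.exp (-((π*θ:ℝ):ℂ) * Complex.I)) := by
    rw [e_eq, mul_sub, ← Complex.exp_add, ← Complex.exp_add]
    norm_num
    congr 2
    push_cast
    ring
  rw [key, hsin]

lemma abs_e_sub_one (θ : ℝ) : ‖e θ - 1‖ = 2 * |Real.sin (π * θ)| := by
  rw [e_sub_one, norm_mul, norm_mul, norm_mul]
  simp only [Complex.norm_exp_ofReal_mul_I, Complex.norm_real, Real.norm_eq_abs, Complex.norm_two, Complex.norm_I]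
  ring

lemma e_sub_one_re (θ : ℝ) : (e θ - 1).re = Real.cos (2*π*θ) - 1 := by
  simp [Complex.sub_re, e_re]

lemma e_sub_one_im (θ : ℝ) : (e θ - 1).im = Real.sin (2*π*θ) := by
  simp [Complex.sub_im, e_im]

lemma normSq_e_sub_one (θ : ℝ) : Complex.normSq (e θ - 1) = 2 - 2 * Real.cos (2*π*θ) := by
  rw [Complex.normSq_apply, e_sub_one_re, e_sub_one_im]
  nlinarith [Real.sin_sq_add_cos_sq (2*π*θ)]

lemma re_inv_e_sub_one (θ : ℝ) (h : Real.cos (2*π*θ) ≠ 1) : ((e θ - 1)⁻¹).re = -(1/2) := by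
  rw [Complex.inv_re, normSq_e_sub_one, e_sub_one_re]
  have h2 : 2 - 2 * Real.cos (2*π*θ) ≠ 0 := by
    intro hc; apply h; linarith [sub_eq_zero.mp hc]
  field_simp
  ring

lemma im_inv_e_sub_one (θ : ℝ) (h0 : 0 < θ) (h1 : θ < 1) :
    ((e θ - 1)⁻¹).im = Real.tan (π*θ - π/2) / 2 := by
  have hx0 : 0 < π * θ := by positivity
  have hx1 : π * θ < π := by nlinarith [Real.pi_pos]
  have hs : 0 < Real.sin (π * θ) := Real.sin_pos_of_pos_of_lt_pi hx0 hx1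
  rw [Complex.inv_im, normSq_e_sub_one, e_sub_one_im]
  have h2x : 2*π*θ = 2*(π*θ) := by ring
  rw [h2x, Real.sin_two_mul, Real.cos_two_mul]
  rw [Real.tan_eq_sin_div_cos]
  have hsin : Real.sin (π*θ - π/2) = -Real.cos (π*θ) := by
    have : π*θ - π/2 = -(π/2 - π*θ) := by ring
    rw [this, Real.sin_neg, Real.sin_pi_div_two_sub]
  have hcos : Real.cos (π*θ - π/2) = Real.sin (π*θ) := by
    have : π*θ - π/2 = -(π/2 - π*θ) := by ring
    rw [this, Real.cos_neg, Real.cos_pi_div_two_sub]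
  rw [hsin, hcos]
  have hden : 2 - 2*(2 * Real.cos (π*θ)^2 - 1) = 4 * Real.sin (π*θ)^2 := by
    nlinarith [Real.sin_sq_add_cos_sq (π*θ)]
  rw [hden]
  field_simp
  ring

lemma im_inv_mono {θ₁ θ₂ : ℝ} (h₁ : 0 < θ₁) (h₂ : θ₂ < 1) (h : θ₁ ≤ θ₂) :
    ((e θ₁ - 1)⁻¹).im ≤ ((e θ₂ - 1)⁻¹).im := by
  have h₁' : θ₁ < 1 := lt_of_le_of_lt h h₂
  have h₂' : 0 < θ₂ := lt_of_lt_of_le h₁ h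
  rw [im_inv_e_sub_one θ₁ h₁ h₁', im_inv_e_sub_one θ₂ h₂' h₂]
  have hpi := Real.pi_pos
  have m1 : π*θ₁ - π/2 ∈ Set.Ioo (-(π/2)) (π/2) := by constructor <;> nlinarith
  have m2 : π*θ₂ - π/2 ∈ Set.Ioo (-(π/2)) (π/2) := by constructor <;> nlinarith
  have := Real.strictMonoOn_tan.monotoneOn m1 m2 (by nlinarith)
  linarith

lemma sin_lb {lam θ : ℝ} (hl : 0 ≤ lam) (h0 : lam ≤ θ) (h1 : θ ≤ 1 - lam) :
    2 * lam ≤ Real.sin (π * θ) := by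
  have hpi := Real.pi_pos
  rcases le_or_gt θ (1/2) with hc | hc
  · have := Real.mul_le_sin (x := π * θ) (by nlinarith) (by nlinarith)
    have h2 : 2 / π * (π * θ) = 2 * θ := by field_simp
    rw [h2] at this
    linarith
  · have hθ1 : π * θ = π - π * (1 - θ) := by ring
    rw [hθ1, Real.sin_pi_sub]
    have := Real.mul_le_sin (x := π * (1-θ)) (by nlinarith) (by nlinarith)
    have h2 : 2 / π * (π * (1-θ)) = 2 * (1-θ) := by field_simp
    rw [h2] at this
    linarith

lemma abs_e_sub_one_ge {lam θ : ℝ} (hl : 0 < lam) (h0 : lam ≤ θ) (h1 : θ ≤ 1 - lam) :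
    4 * lam ≤ ‖e θ - 1‖ := by
  rw [abs_e_sub_one]
  have := sin_lb hl.le h0 h1
  have : 2 * lam ≤ |Real.sin (π * θ)| := le_trans this (le_abs_self _)
  linarith

lemma abs_inv_e_sub_one_le {lam θ : ℝ} (hl : 0 < lam) (h0 : lam ≤ θ) (h1 : θ ≤ 1 - lam) :
    ‖(e θ - 1)⁻¹‖ ≤ 1 / (4 * lam) := by
  rw [norm_inv]
  have h := abs_e_sub_one_ge hl h0 h1
  have h4 : 0 < 4 * lam := by linarith
  rw [inv_eq_one_div]
  apply div_le_div_of_nonneg_left (by norm_num : (0:ℝ) ≤ 1) h4 h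

lemma e_sub_one_ne {lam θ : ℝ} (hl : 0 < lam) (h0 : lam ≤ θ) (h1 : θ ≤ 1 - lam) :
    e θ - 1 ≠ 0 := by
  intro hc
  have := abs_e_sub_one_ge hl h0 h1
  rw [hc] at this
  simp at this
  linarith

lemma cos_ne_one {lam θ : ℝ} (hl : 0 < lam) (h0 : lam ≤ θ) (h1 : θ ≤ 1 - lam) :
    Real.cos (2*π*θ) ≠ 1 := by
  intro hc
  have h := abs_e_sub_one_ge hl h0 h1
  have h2 : Complex.normSq (e θ - 1) = 0 := by rw [normSq_e_sub_one, hc]; ring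
  have h3 : e θ - 1 = 0 := by rwa [Complex.normSq_eq_zero] at h2
  rw [h3] at h; simp at h; linarith

lemma abs_eq_abs_im {z : ℂ} (h : z.re = 0) : ‖z‖ = |z.im| := by
  have hz : z = (z.im : ℂ) * Complex.I := by
    apply Complex.ext <;> simp [h]
  conv_lhs => rw [hz]
  rw [norm_mul, Complex.norm_I, Complex.norm_real, Real.norm_eq_abs, mul_one]

lemma tele_mono {v : ℕ → ℝ} (K : ℕ) (h : Monotone v) :
    ∑ j ∈ Finset.range K, |v (j+1) - v j| = v K - v 0 := by
  have habs : ∀ j, |v (j+1) - v j| = v (j+1) - v j :=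
    fun j => abs_of_nonneg (by linarith [h (Nat.le_succ j)])
  simp_rw [habs]
  exact Finset.sum_range_sub v K

lemma abel_id (A w : ℕ → ℂ) (K : ℕ) :
    ∑ j ∈ Finset.range K, (A (j+1) - A j) * w j
      = A K * w K - A 0 * w 0 - ∑ j ∈ Finset.range K, A (j+1) * (w (j+1) - w j) := by
  have h := Finset.sum_range_sub (fun j => A j * w j) K
  rw [eq_sub_iff_add_eq, ← h, ← Finset.sum_add_distrib]
  exact Finset.sum_congr rfl fun j _ => by ring

/-- Kusmin–Landau first derivative test: there is an absolute constant `C > 0` such that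
for every interval `[a,b]`, every `C¹` function `f` with monotone derivative satisfying
`λ₁ ≤ dist(f'(x), ℤ)` on `[a,b]`, one has `|∑_{n ∈ [a,b] ∩ ℤ} e(f(n))| ≤ C / λ₁`. -/
theorem stmt11 : ∃ C : ℝ, 0 < C ∧
    ∀ (a b : ℝ) (f : ℝ → ℝ) (lam : ℝ), 0 < lam →
      ContDiff ℝ 1 f →
      (MonotoneOn (deriv f) (Set.Icc a b) ∨ AntitoneOn (deriv f) (Set.Icc a b)) →
      (∀ x ∈ Set.Icc a b, ∀ n : ℤ, lam ≤ |deriv f x - n|) →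
      ‖∑ n ∈ Finset.Icc ⌈a⌉ ⌊b⌋, e (f n)‖ ≤ C / lam := by
  refine ⟨2, by norm_num, ?_⟩
  intro a b f lam hlam hf hmono hdist
  rcases lt_or_ge (⌊b⌋ : ℤ) ⌈a⌉ with hemp | hMN
  · rw [Finset.Icc_eq_empty (not_le.mpr hemp)]
    simp only [Finset.sum_empty, norm_zero]
    positivity
  set M : ℤ := ⌈a⌉ with hM
  set N : ℤ := ⌊b⌋ with hN
  have haM : a ≤ (M:ℝ) := Int.le_ceil a
  have hNb : (N:ℝ) ≤ b := Int.floor_le b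
  have hMN' : (M:ℝ) ≤ (N:ℝ) := by exact_mod_cast hMN
  have hab : a ≤ b := le_trans haM (le_trans hMN' hNb)
  have hamem : a ∈ Set.Icc a b := ⟨le_refl a, hab⟩
  have hhalf : lam ≤ 1/2 := by
    have h1 := hdist a hamem ⌊deriv f a⌋
    have h2 := hdist a hamem (⌊deriv f a⌋ + 1)
    have hf1 := Int.floor_le (deriv f a)
    have hf2 := Int.lt_floor_add_one (deriv f a)
    push_cast at h2
    rw [_root_.abs_of_nonneg (by linarith)] at h1
    rw [_root_.abs_of_nonpos (by linarith)] at h2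
    linarith
  have hdiff : Differentiable ℝ f := hf.differentiable (by norm_num)
  have hcont : Continuous (deriv f) := hf.continuous_deriv le_rfl
  set k : ℤ := ⌊deriv f a⌋ with hk
  have key0 : ∀ x ∈ Set.Icc a b, (k:ℝ) ≤ deriv f x ∧ deriv f x ≤ (k:ℝ) + 1 := by
    intro x hx
    have hsub : Set.uIcc x a ⊆ Set.Icc a b := Set.uIcc_subset_Icc hx hamem
    constructor
    · by_contra hlt
      push_neg at hlt
      have hmem : (k:ℝ) ∈ Set.uIcc (deriv f x) (deriv f a) :=
        Set.mem_uIcc.mpr (Or.inl ⟨hlt.le, Int.floor_le _⟩)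
      obtain ⟨ξ, hξ, hval⟩ := intermediate_value_uIcc (hcont.continuousOn) hmem
      have hd := hdist ξ (hsub hξ) k
      rw [hval] at hd
      simp at hd
      linarith
    · by_contra hlt
      push_neg at hlt
      have hfa : deriv f a < (k:ℝ) + 1 := Int.lt_floor_add_one _
      have hmem : (k:ℝ) + 1 ∈ Set.uIcc (deriv f x) (deriv f a) :=
        Set.mem_uIcc.mpr (Or.inr ⟨hfa.le, hlt.le⟩)
      obtain ⟨ξ, hξ, hval⟩ := intermediate_value_uIcc (hcont.continuousOn) hmem
      have hd := hdist ξ (hsub hξ) (k + 1)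
      push_cast at hd
      rw [hval] at hd
      simp at hd
      linarith
  have key : ∀ x ∈ Set.Icc a b, (k:ℝ) + lam ≤ deriv f x ∧ deriv f x ≤ (k:ℝ) + 1 - lam := by
    intro x hx
    obtain ⟨hl, hu⟩ := key0 x hx
    have h1 := hdist x hx k
    have h2 := hdist x hx (k+1)
    push_cast at h2
    rw [_root_.abs_of_nonneg (by linarith)] at h1
    rw [_root_.abs_of_nonpos (by linarith)] at h2
    exact ⟨by linarith, by linarith⟩
  set F : ℝ → ℝ := fun x => f x - (k:ℝ) * x with hF
  have hFdiff : Differentiable ℝ F := hdiff.sub (differentiable_id.const_mul _)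
  have hFderiv : ∀ x : ℝ, deriv F x = deriv f x - k := by
    intro x
    have h1 : HasDerivAt (fun y : ℝ => (k:ℝ) * y) (k:ℝ) x := by
      simpa using (hasDerivAt_id x).const_mul (k:ℝ)
    have h2 : HasDerivAt F (deriv f x - k) x := (hdiff x).hasDerivAt.sub h1
    exact h2.deriv
  set K : ℕ := (N - M).toNat with hK
  have hKcast : (K:ℤ) = N - M := Int.toNat_of_nonneg (by omega)
  have hsum : ∑ n ∈ Finset.Icc M N, e (f n) = ∑ j ∈ Finset.range (K+1), e (F ((M:ℝ) + j)) := by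
    have hIcc : Finset.Icc M N
        = (Finset.range (K+1)).map ⟨fun (j:ℕ) => M + (j:ℤ), fun x y h => by simpa using h⟩ := by
      ext n
      simp only [Finset.mem_Icc, Finset.mem_map, Finset.mem_range, Function.Embedding.coeFn_mk, DFunLike.coe]
      constructor
      · rintro ⟨h1, h2⟩; exact ⟨(n - M).toNat, by omega, by omega⟩
      · rintro ⟨j, hj, rfl⟩; omega
    rw [hIcc, Finset.sum_map]
    apply Finset.sum_congr rfl
    intro j _
    simp only [Function.Embedding.coeFn_mk, DFunLike.coe]
    push_cast
    have h1 : f ((M:ℝ) + j) = F ((M:ℝ) + j) + ((k * (M + (j:ℤ)) : ℤ) : ℝ) := by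
      simp only [hF]; push_cast; ring
    rw [h1, e_add, e_int, mul_one]
  set g : ℕ → ℝ := fun j => F ((M:ℝ) + j + 1) - F ((M:ℝ) + j) with hg
  have hxi : ∀ j : ℕ, ∃ c ∈ Set.Ioo ((M:ℝ)+j) ((M:ℝ)+j+1), deriv F c = g j := by
    intro j
    obtain ⟨c, hc, hval⟩ := exists_deriv_eq_slope F (by linarith : (M:ℝ)+j < (M:ℝ)+j+1)
      (hFdiff.continuous.continuousOn) (hFdiff.differentiableOn)
    refine ⟨c, hc, ?_⟩
    rw [hval]
    simp only [hg]
    have hden : ((M:ℝ)+j+1) - ((M:ℝ)+j) = 1 := by ring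
    rw [hden, div_one]
  choose ξ hξmem hξval using hxi
  have hξab : ∀ j : ℕ, j < K → ξ j ∈ Set.Icc a b := by
    intro j hj
    have h1 := (hξmem j).1
    have h2 := (hξmem j).2
    have hj0 : (0:ℝ) ≤ (j:ℝ) := Nat.cast_nonneg j
    have hjK : (j:ℝ) + 1 ≤ (K:ℝ) := by exact_mod_cast Nat.succ_le_of_lt hj
    have hKr : (K:ℝ) = (N:ℝ) - (M:ℝ) := by exact_mod_cast hKcast
    constructor
    · linarith
    · linarith
  have hgval : ∀ j : ℕ, g j = deriv f (ξ j) - (k:ℝ) := by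
    intro j
    rw [← hξval j, hFderiv]
  have hgbounds : ∀ j : ℕ, j < K → lam ≤ g j ∧ g j ≤ 1 - lam := by
    intro j hj
    rw [hgval j]
    obtain ⟨h1, h2⟩ := key (ξ j) (hξab j hj)
    exact ⟨by linarith, by linarith⟩
  have hξlt : ∀ i j : ℕ, i < j → ξ i < ξ j := by
    intro i j hij
    have h1 := (hξmem i).2
    have h2 := (hξmem j).1
    have : (i:ℝ) + 1 ≤ (j:ℝ) := by exact_mod_cast Nat.succ_le_of_lt hij
    linarith
  have hgm : (∀ i j : ℕ, i < j → j < K → g i ≤ g j) ∨ (∀ i j : ℕ, i < j → j < K → g j ≤ g i) := by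
    rcases hmono with hm | hm
    · left
      intro i j hij hj
      rw [hgval i, hgval j]
      have := hm (hξab i (hij.trans hj)) (hξab j hj) (hξlt i j hij).le
      linarith
    · right
      intro i j hij hj
      rw [hgval i, hgval j]
      have := hm (hξab i (hij.trans hj)) (hξab j hj) (hξlt i j hij).le
      linarith
  rw [hsum]
  rcases Nat.eq_zero_or_pos K with hK0 | hKpos
  · rw [hK0]
    simp only [zero_add, Finset.range_one, Finset.sum_singleton]
    rw [e_abs]
    rw [le_div_iff₀ hlam]
    linarith
  -- main case : K ≥ 1
  set A : ℕ → ℂ := fun j => e (F ((M:ℝ) + j)) with hA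
  set G : ℕ → ℝ := fun j => g (min j (K-1)) with hG
  have hminlt : ∀ j : ℕ, min j (K-1) < K := fun j => lt_of_le_of_lt (min_le_right _ _) (by omega)
  have hGb : ∀ j, lam ≤ G j ∧ G j ≤ 1 - lam := fun j => hgbounds _ (hminlt j)
  set w : ℕ → ℂ := fun j => (e (G j) - 1)⁻¹ with hw
  have hwabs : ∀ j, ‖w j‖ ≤ 1/(4*lam) :=
    fun j => abs_inv_e_sub_one_le hlam (hGb j).1 (hGb j).2
  have hne : ∀ j, e (G j) - 1 ≠ 0 := fun j => e_sub_one_ne hlam (hGb j).1 (hGb j).2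
  have hwre : ∀ j, (w j).re = -(1/2) :=
    fun j => re_inv_e_sub_one _ (cos_ne_one hlam (hGb j).1 (hGb j).2)
  have hstep : ∀ j, j < K → A (j+1) - A j = A j * (e (G j) - 1) := by
    intro j hj
    have hGj : G j = g j := by simp only [hG]; congr 1; omega
    simp only [hA]
    rw [hGj]
    have hcast : (M:ℝ) + ((j:ℕ)+1 : ℕ) = ((M:ℝ) + j) + 1 := by push_cast; ring
    rw [hcast]
    have hF1 : F ((M:ℝ) + j + 1) = F ((M:ℝ)+j) + g j := by simp only [hg]; ring
    rw [hF1, e_add]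
    ring
  have hAval : ∀ j, j < K → A j = (A (j+1) - A j) * w j := by
    intro j hj
    rw [hstep j hj]
    simp only [hw]
    rw [mul_assoc, mul_inv_cancel₀ (hne j), mul_one]
  have hS : ∑ j ∈ Finset.range (K+1), A j
      = (A K * w K - A 0 * w 0 - ∑ j ∈ Finset.range K, A (j+1) * (w (j+1) - w j)) + A K := by
    rw [Finset.sum_range_succ]
    congr 1
    rw [← abel_id A w K]
    exact Finset.sum_congr rfl (fun j hj => hAval j (Finset.mem_range.mp hj))
  have hAabs : ∀ j, ‖A j‖ = 1 := fun j => e_abs _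
  have hGmem01 : ∀ j, 0 < G j ∧ G j < 1 :=
    fun j => ⟨lt_of_lt_of_le hlam (hGb j).1, lt_of_le_of_lt (hGb j).2 (by linarith)⟩
  have hGmono : (∀ i j : ℕ, i ≤ j → G i ≤ G j) ∨ (∀ i j : ℕ, i ≤ j → G j ≤ G i) := by
    rcases hgm with hm | hm
    · left
      intro i j hij
      rcases eq_or_lt_of_le (min_le_min_right (K-1) hij : min i (K-1) ≤ min j (K-1)) with he | hlt
      · simp only [hG]; rw [he]
      · exact hm _ _ hlt (hminlt j)
    · right
      intro i j hij
      rcases eq_or_lt_of_le (min_le_min_right (K-1) hij : min i (K-1) ≤ min j (K-1)) with he | hlt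
      · simp only [hG]; rw [he]
      · exact hm _ _ hlt (hminlt j)
  have hwim_mono : Monotone (fun j => (w j).im) ∨ Monotone (fun j => -(w j).im) := by
    rcases hGmono with hm | hm
    · left
      intro i j hij
      exact im_inv_mono (hGmem01 i).1 (hGmem01 j).2 (hm i j hij)
    · right
      intro i j hij
      simp only [neg_le_neg_iff]
      exact im_inv_mono (hGmem01 j).1 (hGmem01 i).2 (hm i j hij)
  have htel : ∑ j ∈ Finset.range K, ‖w (j+1) - w j‖ ≤ 2 * (1/(4*lam)) := by
    have him : ∀ j, ‖w (j+1) - w j‖ = |(w (j+1)).im - (w j).im| := by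
      intro j
      rw [abs_eq_abs_im (by rw [Complex.sub_re, hwre, hwre]; ring), Complex.sub_im]
    simp_rw [him]
    have hK0 : |(w K).im| ≤ 1/(4*lam) := le_trans (Complex.abs_im_le_norm _) (hwabs K)
    have h00 : |(w 0).im| ≤ 1/(4*lam) := le_trans (Complex.abs_im_le_norm _) (hwabs 0)
    have hK0' := abs_le.mp hK0
    have h00' := abs_le.mp h00
    rcases hwim_mono with hm | hm
    · rw [tele_mono K hm]
      linarith [hK0'.1, hK0'.2, h00'.1, h00'.2]
    · have heq : ∀ j, |(w (j+1)).im - (w j).im| = |(-(w (j+1)).im) - (-(w j).im)| := by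
        intro j
        rw [neg_sub_neg, abs_sub_comm]
      simp_rw [heq]
      rw [tele_mono K hm]
      linarith [hK0'.1, hK0'.2, h00'.1, h00'.2]
  -- final assembly
  have hfinal : ‖∑ j ∈ Finset.range (K+1), A j‖ ≤ 1 + 1/lam := by
    rw [hS]
    have hb1 : ‖A K * w K‖ ≤ 1/(4*lam) := by
      rw [norm_mul, hAabs, one_mul]
      exact hwabs K
    have hb2 : ‖A 0 * w 0‖ ≤ 1/(4*lam) := by
      rw [norm_mul, hAabs, one_mul]
      exact hwabs 0
    have hb3 : ‖∑ j ∈ Finset.range K, A (j+1) * (w (j+1) - w j)‖ ≤ 2 * (1/(4*lam)) := by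
      refine le_trans (norm_sum_le _ _) (le_trans (Finset.sum_le_sum (fun j _ => ?_)) htel)
      have hterm : ‖A (j+1) * (w (j+1) - w j)‖ = ‖w (j+1) - w j‖ := by
        rw [norm_mul, hAabs, one_mul]
      exact le_of_eq hterm
    have hb4 : ‖A K‖ = 1 := by rw [hAabs]
    calc ‖A K * w K - A 0 * w 0 - (∑ j ∈ Finset.range K, A (j+1) * (w (j+1) - w j)) + A K‖
        ≤ ‖A K * w K - A 0 * w 0 - ∑ j ∈ Finset.range K, A (j+1) * (w (j+1) - w j)‖ + ‖A K‖ :=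
          norm_add_le _ _
      _ ≤ (‖A K * w K - A 0 * w 0‖ + ‖∑ j ∈ Finset.range K, A (j+1) * (w (j+1) - w j)‖) + ‖A K‖ := by
          gcongr; exact norm_sub_le _ _
      _ ≤ ((‖A K * w K‖ + ‖A 0 * w 0‖) + ‖∑ j ∈ Finset.range K, A (j+1) * (w (j+1) - w j)‖) + ‖A K‖ := by
          gcongr; exact norm_sub_le _ _
      _ ≤ ((1/(4*lam) + 1/(4*lam)) + 2 * (1/(4*lam))) + 1 := by
          rw [hb4]; gcongr
      _ = 1 + 1/lam := by field_simp; ring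
  have hnum : 1 + 1/lam ≤ 2/lam := by
    have h1 : (1:ℝ) ≤ 1/lam := by rw [le_div_iff₀ hlam]; linarith
    have h2 : 1/lam + 1/lam = 2/lam := by ring
    linarith
  exact le_trans hfinal hnum
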